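/- Let 2 ≤ p_1 ≤ ⋯ ≤ p_m and H = K_{p_1} ∪ ⋯ ∪ K_{p_m}. Then there exist constants c_H, c'_H depending only on H such that (p_1 − 2)·n − c'_H ≤ sat(H, n) ≤ (p_1 − 2)·n + c_H for all n ≥ p_1 + ⋯ + p_m. -/

import Mathlib

open SimpleGraph

/-- `H` has a copy in `G`: an injective graph homomorphism (i.e. a subgraph isomorphic to `H`). -/
def hasCopy {α β : Type*} (H : SimpleGraph α) (G : SimpleGraph β) : Prop :=
  ∃ f : H →g G, Function.Injective f

/-- `G` is `H`-saturated: `H`-free, and adding any missing edge creates a copy of `H`. -/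
def isSat {α β : Type*} (H : SimpleGraph α) (G : SimpleGraph β) : Prop :=
  ¬ hasCopy H G ∧ ∀ x y : β, x ≠ y → ¬ G.Adj x y →
    hasCopy H (G ⊔ SimpleGraph.fromEdgeSet {s(x, y)})

/-- The weight of an edge `uv`: with `deg u ≤ deg v`,
`wt(uv) = 2|N(u) ∩ N(v)| + |N(v) \ N(u)|`. -/
noncomputable def edgeWt {α : Type*} (H : SimpleGraph α) (u v : α) : ℕ :=
  if (H.neighborSet u).ncard ≤ (H.neighborSet v).ncard then
    2 * (H.neighborSet u ∩ H.neighborSet v).ncard + ((H.neighborSet v) \ (H.neighborSet u)).ncard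
  else
    2 * (H.neighborSet u ∩ H.neighborSet v).ncard + ((H.neighborSet u) \ (H.neighborSet v)).ncard

/-- The weight of a graph: the minimum weight of an edge. -/
noncomputable def graphWt {α : Type*} (H : SimpleGraph α) : ℕ :=
  sInf {w | ∃ u v, H.Adj u v ∧ w = edgeWt H u v}

/-- The saturation number: minimum number of edges of an `H`-saturated graph on `n` vertices. -/
noncomputable def satNum {α : Type*} (H : SimpleGraph α) (n : ℕ) : ℕ :=
  sInf {m | ∃ G : SimpleGraph (Fin n), isSat H G ∧ Nat.card G.edgeSet = m}

/-- The graph obtained from `H` by adding a dominating vertex (`none`). -/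
def addDom {α : Type*} (H : SimpleGraph α) : SimpleGraph (Option α) :=
  SimpleGraph.fromRel (fun x y => x = none ∨ ∃ u v, x = some u ∧ y = some v ∧ H.Adj u v)


/-- The disjoint union of cliques `K_{p 0} ∪ ... ∪ K_{p (m-1)}`. -/
def cliqueUnion (m : ℕ) (p : Fin m → ℕ) : SimpleGraph (Σ i : Fin m, Fin (p i)) :=
  SimpleGraph.fromRel (fun x y => x.1 = y.1)

open SimpleGraph Finset

lemma lower_aux {n k : ℕ} (G : SimpleGraph (Fin n)) [DecidableRel G.Adj]
    (hP : ∀ x y : Fin n, x ≠ y → ¬ G.Adj x y →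
      k ≤ (G.neighborFinset x ∩ G.neighborFinset y).card) :
    k * n ≤ G.edgeFinset.card + k * (2 * k + 1) := by
  by_cases hdeg : ∀ v, 2 * k ≤ G.degree v
  · have h2 : (2 * k) * n ≤ 2 * G.edgeFinset.card := by
      rw [← G.sum_degrees_eq_twice_card_edges]
      calc (2 * k) * n = ∑ _v : Fin n, 2 * k := by simp [mul_comm]
        _ ≤ ∑ v, G.degree v := Finset.sum_le_sum fun v _ => hdeg v
    have h3 : 2 * (k * n) ≤ 2 * G.edgeFinset.card := by rwa [← mul_assoc]
    have := Nat.le_of_mul_le_mul_left h3 (by norm_num)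
    omega
  · push_neg at hdeg
    obtain ⟨u, hu⟩ := hdeg
    set S := G.neighborFinset u with hS
    set T := (univ : Finset (Fin n)) \ insert u S with hT
    have hTS : ∀ y ∈ T, y ∉ insert u S := by
      intro y hy
      simp only [hT, Finset.mem_sdiff] at hy
      exact hy.2
    have hcardA : (insert u S).card ≤ 2 * k := by
      have := Finset.card_insert_le u S
      have hdegu : S.card = G.degree u := (G.card_neighborFinset_eq_degree u)
      omega
    have hnT : n ≤ T.card + 2 * k := by
      have h1 : T.card = n - (insert u S).card := by
        rw [hT, Finset.card_sdiff_of_subset (Finset.subset_univ _), Finset.card_univ, Fintype.card_fin]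
      have h2 : (insert u S).card ≤ n := by
        have := Finset.card_le_univ (insert u S)
        simpa using this
      omega
    -- the edge collection
    set F := T.biUnion (fun y => (G.neighborFinset y ∩ S).image (fun z => s(y, z))) with hF
    have hFsub : F ⊆ G.edgeFinset := by
      intro e he
      simp only [hF, Finset.mem_biUnion, Finset.mem_image, Finset.mem_inter,
        mem_neighborFinset] at he
      obtain ⟨y, _, z, ⟨hadj, _⟩, rfl⟩ := he
      simpa [SimpleGraph.mem_edgeFinset] using hadj
    have hdisj : ∀ y₁ ∈ T, ∀ y₂ ∈ T, y₁ ≠ y₂ →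
        Disjoint ((G.neighborFinset y₁ ∩ S).image (fun z => s(y₁, z)))
          ((G.neighborFinset y₂ ∩ S).image (fun z => s(y₂, z))) := by
      intro y₁ h₁ y₂ h₂ hne
      rw [Finset.disjoint_left]
      rintro e he1 he2
      simp only [Finset.mem_image, Finset.mem_inter] at he1 he2
      obtain ⟨z₁, ⟨hz1, hz1S⟩, rfl⟩ := he1
      obtain ⟨z₂, ⟨hz2, hz2S⟩, heq⟩ := he2
      rw [Sym2.eq_iff] at heq
      rcases heq with ⟨h, -⟩ | ⟨h, h'⟩
      · exact hne (h.symm)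
      · exact hTS y₁ h₁ (Finset.mem_insert_of_mem (h' ▸ hz2S))
    have hcardF : F.card = ∑ y ∈ T, ((G.neighborFinset y ∩ S).image (fun z => s(y, z))).card :=
      Finset.card_biUnion hdisj
    have hk : ∀ y ∈ T, k ≤ ((G.neighborFinset y ∩ S).image (fun z => s(y, z))).card := by
      intro y hy
      have hyu : y ≠ u := by
        intro h; exact hTS y hy (h ▸ Finset.mem_insert_self u S)
      have hyadj : ¬ G.Adj u y := by
        intro h
        exact hTS y hy (Finset.mem_insert_of_mem (by rwa [hS, mem_neighborFinset]))
      have hcommon := hP u y (Ne.symm hyu) hyadj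
      have himg : ((G.neighborFinset y ∩ S).image (fun z => s(y, z))).card
          = (G.neighborFinset y ∩ S).card := by
        apply Finset.card_image_of_injOn
        intro a _ b _ hab
        exact (Sym2.congr_right).mp hab
      rw [himg]
      rw [Finset.inter_comm] at hcommon
      exact hcommon
    have hge : k * T.card ≤ F.card := by
      rw [hcardF]
      calc k * T.card = ∑ _y ∈ T, k := by rw [Finset.sum_const, smul_eq_mul, mul_comm]
        _ ≤ _ := Finset.sum_le_sum hk
    have hFle : F.card ≤ G.edgeFinset.card := Finset.card_le_card hFsub
    calc k * n ≤ k * (T.card + 2 * k) := Nat.mul_le_mul_left k hnT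
      _ = k * T.card + 2 * k * k := by ring
      _ ≤ G.edgeFinset.card + k * (2 * k + 1) := by nlinarith
open SimpleGraph Finset

lemma cliqueUnion_adj {m : ℕ} {p : Fin m → ℕ} {u v : Σ i : Fin m, Fin (p i)} :
    (cliqueUnion m p).Adj u v ↔ u ≠ v ∧ u.1 = v.1 := by
  simp only [cliqueUnion, fromRel_adj]
  tauto

lemma sigma_snd_eq {m : ℕ} {p : Fin m → ℕ} {i : Fin m} {a b : Fin (p i)}
    (h : (⟨i, a⟩ : Σ j : Fin m, Fin (p j)) = ⟨i, b⟩) : a = b := by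
  have := Sigma.mk.inj_iff.mp h
  exact eq_of_heq this.2

lemma common_core {m : ℕ} (hm : 0 < m) (p : Fin m → ℕ) (hmono : Monotone p) {n : ℕ}
    (G : SimpleGraph (Fin n)) [DecidableRel G.Adj] {x y : Fin n} (hxy : x ≠ y)
    (G' : SimpleGraph (Fin n))
    (hsub : ∀ a b, G'.Adj a b → G.Adj a b ∨ (a = x ∧ b = y) ∨ (a = y ∧ b = x))
    (f : cliqueUnion m p →g G')
    (hf : Function.Injective f) {u v : Σ i : Fin m, Fin (p i)}
    (huv : (cliqueUnion m p).Adj u v) (hu : f u = x) (hv : f v = y) :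
    p ⟨0, hm⟩ - 2 ≤ (G.neighborFinset x ∩ G.neighborFinset y).card := by
  rw [cliqueUnion_adj] at huv
  obtain ⟨hne, hfst⟩ := huv
  obtain ⟨i, a⟩ := u
  obtain ⟨i', b⟩ := v
  obtain rfl : i = i' := hfst
  have hab : a ≠ b := by
    intro h; exact hne (by rw [h])
  set W : Finset (Fin (p i)) := (Finset.univ.erase a).erase b with hW
  have hWcard : W.card = p i - 2 := by
    rw [hW, Finset.card_erase_of_mem (Finset.mem_erase.mpr ⟨hab.symm, Finset.mem_univ b⟩),
      Finset.card_erase_of_mem (Finset.mem_univ a), Finset.card_univ, Fintype.card_fin]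
    omega
  have hmem : ∀ w ∈ W, f ⟨i, w⟩ ∈ G.neighborFinset x ∩ G.neighborFinset y := by
    intro w hw
    have hwa : w ≠ a := (Finset.mem_erase.mp (Finset.mem_erase.mp hw).2).1
    have hwb : w ≠ b := (Finset.mem_erase.mp hw).1
    have hwx : f ⟨i, w⟩ ≠ x := by
      intro h
      exact hwa (sigma_snd_eq (hf (h.trans hu.symm)))
    have hwy : f ⟨i, w⟩ ≠ y := by
      intro h
      exact hwb (sigma_snd_eq (hf (h.trans hv.symm)))
    have hadjx : G.Adj (f ⟨i, w⟩) x := by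
      have h0 : G'.Adj (f ⟨i, w⟩) (f ⟨i, a⟩) :=
        f.map_adj (cliqueUnion_adj.mpr ⟨by simp [Sigma.ext_iff, hwa], rfl⟩)
      rw [hu] at h0
      rcases hsub _ _ h0 with h | ⟨-, h⟩ | ⟨h, -⟩
      · exact h
      · exact absurd h hxy
      · exact absurd h hwy
    have hadjy : G.Adj (f ⟨i, w⟩) y := by
      have h0 : G'.Adj (f ⟨i, w⟩) (f ⟨i, b⟩) :=
        f.map_adj (cliqueUnion_adj.mpr ⟨by simp [Sigma.ext_iff, hwb], rfl⟩)
      rw [hv] at h0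
      rcases hsub _ _ h0 with h | ⟨h, -⟩ | ⟨-, h⟩
      · exact h
      · exact absurd h hwx
      · exact absurd h.symm hxy
    simp only [Finset.mem_inter, mem_neighborFinset]
    exact ⟨hadjx.symm, hadjy.symm⟩
  have hinj : Set.InjOn (fun w => f ⟨i, w⟩) W := by
    intro w1 _ w2 _ h
    exact sigma_snd_eq (hf h)
  have := Finset.card_le_card_of_injOn (fun w => f ⟨i, w⟩) hmem hinj
  have hpi : p ⟨0, hm⟩ ≤ p i := hmono (by exact Fin.mk_le_mk.mpr (Nat.zero_le _))
  omega

lemma common_aux {m : ℕ} (hm : 0 < m) (p : Fin m → ℕ) (hmono : Monotone p) {n : ℕ}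
    (G : SimpleGraph (Fin n)) [DecidableRel G.Adj] {x y : Fin n} (hxy : x ≠ y)
    (hfree : ¬ hasCopy (cliqueUnion m p) G)
    (hc : hasCopy (cliqueUnion m p) (G ⊔ SimpleGraph.fromEdgeSet {s(x, y)})) :
    p ⟨0, hm⟩ - 2 ≤ (G.neighborFinset x ∩ G.neighborFinset y).card := by
  obtain ⟨f, hf⟩ := hc
  have hsub : ∀ a b, (G ⊔ SimpleGraph.fromEdgeSet {s(x, y)}).Adj a b →
      G.Adj a b ∨ (a = x ∧ b = y) ∨ (a = y ∧ b = x) := by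
    intro a b hab
    rcases hab with h | h
    · exact Or.inl h
    · rw [fromEdgeSet_adj] at h
      have h1 : s(a, b) = s(x, y) := h.1
      rw [Sym2.eq_iff] at h1
      tauto
  by_cases hex : ∃ u v, (cliqueUnion m p).Adj u v ∧ s(f u, f v) = s(x, y)
  · obtain ⟨u, v, huv, he⟩ := hex
    rw [Sym2.eq_iff] at he
    rcases he with ⟨hu, hv⟩ | ⟨hu, hv⟩
    · exact common_core hm p hmono G hxy _ hsub f hf huv hu hv
    · rw [Finset.inter_comm]
      exact common_core hm p hmono G hxy.symm _ (fun a b h => by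
        rcases hsub a b h with h' | h' | h'
        · exact Or.inl h'
        · exact Or.inr (Or.inr h')
        · exact Or.inr (Or.inl h')) f hf huv hu hv
  · exfalso
    apply hfree
    refine ⟨⟨f, ?_⟩, hf⟩
    intro a b hab
    rcases f.map_adj hab with h | h
    · exact h
    · rw [fromEdgeSet_adj] at h
      have h1 : s(f a, f b) = s(x, y) := h.1
      push_neg at hex
      exact absurd h1 (hex a b hab)
open SimpleGraph Finset

/-- Construction: vertices `< k` are dominating (set A), vertices in `[k, k+b)` form a
clique B (joined to A), the rest is independent, joined to A. -/
def Gc (n k b : ℕ) : SimpleGraph (Fin n) :=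
  SimpleGraph.fromRel (fun x y => x.val < k ∨ y.val < k ∨ (x.val < k + b ∧ y.val < k + b))

lemma Gc_adj {n k b : ℕ} {x y : Fin n} : (Gc n k b).Adj x y ↔
    x ≠ y ∧ (x.val < k ∨ y.val < k ∨ (x.val < k + b ∧ y.val < k + b)) := by
  simp only [Gc, fromRel_adj]
  tauto

instance {n k b : ℕ} : DecidableRel (Gc n k b).Adj :=
  fun _ _ => decidable_of_iff _ Gc_adj.symm

lemma filter_lt_card (n c : ℕ) : (Finset.univ.filter (fun z : Fin n => z.val < c)).card ≤ c := by
  have := Finset.card_le_card_of_injOn (fun z : Fin n => z.val)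
    (s := Finset.univ.filter (fun z : Fin n => z.val < c)) (t := Finset.range c)
    (by intro z hz; rw [Finset.mem_coe] at hz ⊢; simp only [Finset.mem_filter] at hz; exact Finset.mem_range.mpr hz.2)
    (fun z1 _ z2 _ h => Fin.val_injective h)
  simpa using this

lemma Gc_degree_le {n k b : ℕ} (v : Fin n) :
    (Gc n k b).degree v ≤ (if v.val < k then n else 0) + (if v.val < k + b then b else 0) + k := by
  by_cases h1 : v.val < k
  · rw [if_pos h1]
    have : (Gc n k b).degree v ≤ n := by
      rw [← SimpleGraph.card_neighborFinset_eq_degree]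
      have := Finset.card_le_univ ((Gc n k b).neighborFinset v)
      simpa using this
    omega
  · rw [if_neg h1]
    by_cases h2 : v.val < k + b
    · rw [if_pos h2]
      have hsub : (Gc n k b).neighborFinset v ⊆
          Finset.univ.filter (fun z : Fin n => z.val < k + b) := by
        intro w hw
        rw [mem_neighborFinset, Gc_adj] at hw
        simp only [Finset.mem_filter, Finset.mem_univ, true_and]
        rcases hw.2 with h | h | h <;> omega
      have := (Finset.card_le_card hsub).trans (filter_lt_card n (k + b))
      rw [← SimpleGraph.card_neighborFinset_eq_degree]
      omega
    · rw [if_neg h2]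
      have hsub : (Gc n k b).neighborFinset v ⊆
          Finset.univ.filter (fun z : Fin n => z.val < k) := by
        intro w hw
        rw [mem_neighborFinset, Gc_adj] at hw
        simp only [Finset.mem_filter, Finset.mem_univ, true_and]
        rcases hw.2 with h | h | h <;> omega
      have := (Finset.card_le_card hsub).trans (filter_lt_card n k)
      rw [← SimpleGraph.card_neighborFinset_eq_degree]
      omega

lemma Gc_card_le (n k b : ℕ) : (Gc n k b).edgeFinset.card ≤ k * n + b * (k + b) := by
  have hsum := (Gc n k b).sum_degrees_eq_twice_card_edges
  have hle : ∑ v : Fin n, (Gc n k b).degree v ≤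
      ∑ v : Fin n, ((if v.val < k then n else 0) + (if v.val < k + b then b else 0) + k) :=
    Finset.sum_le_sum fun v _ => Gc_degree_le v
  have h1 : ∑ v : Fin n, (if v.val < k then n else 0)
      = (Finset.univ.filter (fun z : Fin n => z.val < k)).card * n := by
    rw [← Finset.sum_filter, Finset.sum_const, smul_eq_mul]
  have h2 : ∑ v : Fin n, (if v.val < k + b then b else 0)
      = (Finset.univ.filter (fun z : Fin n => z.val < k + b)).card * b := by
    rw [← Finset.sum_filter, Finset.sum_const, smul_eq_mul]
  have h3 : ∑ v : Fin n, ((if v.val < k then n else 0) + (if v.val < k + b then b else 0) + k)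
      ≤ k * n + (k + b) * b + n * k := by
    rw [Finset.sum_add_distrib, Finset.sum_add_distrib, h1, h2, Finset.sum_const,
      Finset.card_univ, Fintype.card_fin, smul_eq_mul]
    have := filter_lt_card n k
    have := filter_lt_card n (k + b)
    gcongr
  nlinarith [hsum, hle, h3]
open SimpleGraph Finset

def off {m : ℕ} (p : Fin m → ℕ) (i : ℕ) : ℕ :=
  ∑ j ∈ Finset.range i, if h : j < m then p ⟨j, h⟩ else 0

lemma off_mono {m : ℕ} (p : Fin m → ℕ) {i i' : ℕ} (h : i ≤ i') : off p i ≤ off p i' :=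
  Finset.sum_le_sum_of_subset (Finset.range_subset_range.mpr h)

lemma off_succ {m : ℕ} (p : Fin m → ℕ) (i : Fin m) :
    off p (i.val + 1) = off p i.val + p i := by
  rw [off, Finset.sum_range_succ, dif_pos i.isLt]
  rfl

lemma off_one {m : ℕ} (p : Fin m → ℕ) (hm : 0 < m) : off p 1 = p ⟨0, hm⟩ := by
  rw [off, Finset.sum_range_one, dif_pos hm]

lemma off_top {m : ℕ} (p : Fin m → ℕ) : off p m = ∑ i, p i := by
  rw [off, ← Fin.sum_univ_eq_sum_range]
  exact Finset.sum_congr rfl fun i _ => by simp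

def lidx {m : ℕ} {p : Fin m → ℕ} (z : Σ i : Fin m, Fin (p i)) : ℕ :=
  off p z.1.val + z.2.val

lemma lidx_lt {m : ℕ} {p : Fin m → ℕ} (z : Σ i : Fin m, Fin (p i)) :
    lidx z < ∑ i, p i := by
  have h1 : lidx z < off p (z.1.val + 1) := by
    rw [off_succ]
    exact Nat.add_lt_add_left z.2.isLt _
  have h2 : off p (z.1.val + 1) ≤ off p m := off_mono p z.1.isLt
  rw [off_top] at h2
  omega

lemma lidx_ge {m : ℕ} {p : Fin m → ℕ} (hm : 0 < m) (z : Σ i : Fin m, Fin (p i))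
    (hz : z.1.val ≠ 0) : p ⟨0, hm⟩ ≤ lidx z := by
  have h1 : off p 1 ≤ off p z.1.val := off_mono p (by omega)
  rw [off_one p hm] at h1
  exact h1.trans (Nat.le_add_right _ _)

lemma lidx_inj {m : ℕ} {p : Fin m → ℕ} {z z' : Σ i : Fin m, Fin (p i)}
    (h : lidx z = lidx z') : z = z' := by
  obtain ⟨i, a⟩ := z
  obtain ⟨i', a'⟩ := z'
  have key : ∀ j j' : Fin m, ∀ c : Fin (p j), ∀ c' : Fin (p j'), j.val < j'.val →
      off p j.val + c.val < off p j'.val + c'.val := by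
    intro j j' c c' hjj
    have h1 : off p j.val + c.val < off p (j.val + 1) := by
      rw [off_succ]; exact Nat.add_lt_add_left c.isLt _
    have h2 : off p (j.val + 1) ≤ off p j'.val := off_mono p (by omega)
    omega
  have hii : i.val = i'.val := by
    rcases lt_trichotomy i.val i'.val with hlt | heq | hgt
    · exact absurd h (by have := key i i' a a' hlt; simp only [lidx] at *; omega)
    · exact heq
    · exact absurd h (by have := key i' i a' a hgt; simp only [lidx] at *; omega)
  obtain rfl : i = i' := Fin.ext hii
  simp only [lidx] at h
  have : a.val = a'.val := by omega
  rw [Sigma.mk.inj_iff]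
  exact ⟨rfl, heq_of_eq (Fin.ext this)⟩

section Free
open Classical in
lemma free_aux {m : ℕ} (hm : 0 < m) (p : Fin m → ℕ) (hp : ∀ i, 2 ≤ p i)
    (hmono : Monotone p) (n : ℕ) :
    ¬ hasCopy (cliqueUnion m p) (Gc n (p ⟨0, hm⟩ - 2) (∑ i, p i - p ⟨0, hm⟩ + 1)) := by
  set q := p ⟨0, hm⟩ with hq
  set s := ∑ i, p i with hs
  set k := q - 2 with hk
  set b := s - q + 1 with hb
  have hq2 : 2 ≤ q := hp _
  have hqs : q ≤ s := by
    rw [hs]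
    exact Finset.single_le_sum (fun i _ => Nat.zero_le _) (Finset.mem_univ (⟨0, hm⟩ : Fin m))
  have hkb : k + b = s - 1 := by omega
  rintro ⟨f, hf⟩
  have hlt : ∀ z : Σ i : Fin m, Fin (p i), (f z).val < k + b := by
    rintro ⟨i, a⟩
    by_contra hge
    push_neg at hge
    have hnb : ∀ w : Fin (p i), w ≠ a → (f ⟨i, w⟩).val < k := by
      intro w hw
      have hadj : (Gc n k b).Adj (f ⟨i, w⟩) (f ⟨i, a⟩) :=
        f.map_adj (cliqueUnion_adj.mpr ⟨by simp [Sigma.ext_iff, hw], rfl⟩)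
      rw [Gc_adj] at hadj
      rcases hadj.2 with h | h | h
      · exact h
      · omega
      · omega
    have hcard := Finset.card_le_card_of_injOn (fun w => f ⟨i, w⟩)
      (s := Finset.univ.erase a) (t := Finset.univ.filter (fun z : Fin n => z.val < k))
      (by
        intro w hw
        rw [Finset.mem_coe]
        simp only [Finset.mem_filter, Finset.mem_univ, true_and]
        exact hnb w (Finset.mem_erase.mp hw).1)
      (by
        intro w1 _ w2 _ h
        exact sigma_snd_eq (hf h))
    rw [Finset.card_erase_of_mem (Finset.mem_univ a), Finset.card_univ, Fintype.card_fin] at hcard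
    have hpi : q ≤ p i := hmono (Fin.mk_le_mk.mpr (Nat.zero_le _))
    have := filter_lt_card n k
    omega
  have hbig := Finset.card_le_card_of_injOn f
    (s := Finset.univ) (t := Finset.univ.filter (fun z : Fin n => z.val < k + b))
    (by
      intro z _
      rw [Finset.mem_coe]
      simp only [Finset.mem_filter, Finset.mem_univ, true_and]
      exact hlt z)
    (fun z1 _ z2 _ h => hf h)
  rw [Finset.card_univ, Fintype.card_sigma] at hbig
  simp only [Fintype.card_fin] at hbig
  have := filter_lt_card n (k + b)
  rw [← hs] at hbig
  omega
end Free
open SimpleGraph Finset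

/-- the skip function avoiding `c` -/
def skf (c t : ℕ) : ℕ := if t < c then t else t + 1

lemma skf_ge (c t : ℕ) : t ≤ skf c t := by unfold skf; split <;> omega
lemma skf_le (c t : ℕ) : skf c t ≤ t + 1 := by unfold skf; split <;> omega
lemma skf_ne (c t : ℕ) : skf c t ≠ c := by unfold skf; split <;> omega
lemma skf_strictMono (c : ℕ) : StrictMono (skf c) := by
  intro t t' h
  unfold skf
  split <;> split <;> omega

lemma sat_edge {m : ℕ} (hm : 0 < m) (p : Fin m → ℕ) (hp : ∀ i, 2 ≤ p i)
    (hmono : Monotone p) {n : ℕ} (hn : ∑ i, p i ≤ n) (x y : Fin n) (hxy : x ≠ y)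
    (hx : p ⟨0, hm⟩ - 2 ≤ x.val)
    (hy : (p ⟨0, hm⟩ - 2) + (∑ i, p i - p ⟨0, hm⟩ + 1) ≤ y.val) :
    hasCopy (cliqueUnion m p)
      (Gc n (p ⟨0, hm⟩ - 2) (∑ i, p i - p ⟨0, hm⟩ + 1) ⊔
        SimpleGraph.fromEdgeSet {s(x, y)}) := by
  set q := p ⟨0, hm⟩ with hq
  set s := ∑ i, p i with hs
  set k := q - 2 with hk
  set b := s - q + 1 with hb
  have hq2 : 2 ≤ q := hp _
  have hqs : q ≤ s := by
    rw [hs]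
    exact Finset.single_le_sum (fun i _ => Nat.zero_le _) (Finset.mem_univ (⟨0, hm⟩ : Fin m))
  have hsn : s ≤ n := hn
  -- the target indices for blocks other than 0
  have htb : ∀ z : Σ i : Fin m, Fin (p i), z.1.val ≠ 0 →
      k ≤ skf x.val (k + (lidx z - q)) ∧ skf x.val (k + (lidx z - q)) ≤ k + b - 1 := by
    intro z hz
    have h1 := lidx_ge hm z hz
    have h2 := lidx_lt z
    have h3 := skf_ge x.val (k + (lidx z - q))
    have h4 := skf_le x.val (k + (lidx z - q))
    rw [← hq] at h1
    rw [← hs] at h2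
    omega
  -- the mapping
  set F : (Σ i : Fin m, Fin (p i)) → Fin n := fun z =>
    if h0 : z.1.val = 0 then
      (if z.2.val = 0 then x else if z.2.val = 1 then y
       else ⟨z.2.val - 2, by
         have h1 : z.2.val < p z.1 := z.2.isLt
         have h2 : p z.1 ≤ s := by
           rw [hs]; exact Finset.single_le_sum (fun i _ => Nat.zero_le _) (Finset.mem_univ z.1)
         omega⟩)
    else ⟨skf x.val (k + (lidx z - q)), by have := (htb z h0).2; omega⟩
    with hF
  -- value facts
  have hF0x : ∀ z : Σ i : Fin m, Fin (p i), z.1.val = 0 → z.2.val = 0 → F z = x := by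
    intro z h0 h1
    simp only [hF, dif_pos h0, if_pos h1]
  have hF0y : ∀ z : Σ i : Fin m, Fin (p i), z.1.val = 0 → z.2.val = 1 → F z = y := by
    intro z h0 h1
    simp only [hF, dif_pos h0]
    rw [if_neg (by omega), if_pos h1]
  have hF0A : ∀ z : Σ i : Fin m, Fin (p i), z.1.val = 0 → 2 ≤ z.2.val →
      (F z).val = z.2.val - 2 := by
    intro z h0 h1
    simp only [hF, dif_pos h0]
    rw [if_neg (by omega), if_neg (by omega)]
  have hFB : ∀ z : Σ i : Fin m, Fin (p i), z.1.val ≠ 0 →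
      (F z).val = skf x.val (k + (lidx z - q)) := by
    intro z h0
    simp only [hF, dif_neg h0]
  -- block-0 A-values are < k
  have hAk : ∀ z : Σ i : Fin m, Fin (p i), z.1.val = 0 → 2 ≤ z.2.val → (F z).val < k := by
    intro z h0 h1
    rw [hF0A z h0 h1]
    have h2 : z.2.val < p z.1 := z.2.isLt
    have h3 : p z.1 = q := by
      rw [hq]; congr 1; exact Fin.ext h0
    omega
  -- B-values: in [k, k+b), different from x and y
  have hBrange : ∀ z : Σ i : Fin m, Fin (p i), z.1.val ≠ 0 →
      k ≤ (F z).val ∧ (F z).val < k + b ∧ (F z).val ≠ x.val ∧ (F z).val ≠ y.val := by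
    intro z h0
    rw [hFB z h0]
    have h1 := htb z h0
    have h2 := skf_ne x.val (k + (lidx z - q))
    have hyv : k + b ≤ y.val := hy
    refine ⟨h1.1, by omega, h2, by omega⟩
  -- injectivity
  have hFinj : Function.Injective F := by
    rintro ⟨i, a⟩ ⟨i', a'⟩ heq
    have hveq : (F ⟨i, a⟩).val = (F ⟨i', a'⟩).val := by rw [heq]
    by_cases h0 : (i : ℕ) = 0 <;> by_cases h0' : (i' : ℕ) = 0
    · -- both block 0
      obtain rfl : i = i' := Fin.ext (by omega)
      have hsnd : a.val = a'.val := by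
        rcases Nat.lt_or_ge a.val 2 with ha | ha <;> rcases Nat.lt_or_ge a'.val 2 with ha' | ha'
        · interval_cases hz2 : (a : ℕ) <;> interval_cases hz2' : (a' : ℕ)
          · rfl
          · exact absurd ((hF0x ⟨i, a⟩ h0 hz2).symm.trans
              (heq.trans (hF0y ⟨i, a'⟩ h0' hz2'))) hxy
          · exact absurd ((hF0y ⟨i, a⟩ h0 hz2).symm.trans
              (heq.trans (hF0x ⟨i, a'⟩ h0' hz2'))) (Ne.symm hxy)
          · rfl
        · exfalso
          have hlt := hAk ⟨i, a'⟩ h0' ha'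
          rcases Nat.lt_or_ge a.val 1 with hb1 | hb1
          · have hh := hF0x ⟨i, a⟩ h0 (show (a:ℕ) = 0 by omega)
            rw [← heq, hh] at hlt
            omega
          · have hh := hF0y ⟨i, a⟩ h0 (show (a:ℕ) = 1 by omega)
            rw [← heq, hh] at hlt
            have : k + b ≤ y.val := hy
            omega
        · exfalso
          have hlt := hAk ⟨i, a⟩ h0 ha
          rcases Nat.lt_or_ge a'.val 1 with hb1 | hb1
          · have hh := hF0x ⟨i, a'⟩ h0' (show (a':ℕ) = 0 by omega)
            rw [heq, hh] at hlt
            omega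
          · have hh := hF0y ⟨i, a'⟩ h0' (show (a':ℕ) = 1 by omega)
            rw [heq, hh] at hlt
            have : k + b ≤ y.val := hy
            omega
        · have e1 : (F ⟨i, a⟩).val = (a : ℕ) - 2 := hF0A ⟨i, a⟩ h0 ha
          have e2 : (F ⟨i, a'⟩).val = (a' : ℕ) - 2 := hF0A ⟨i, a'⟩ h0' ha'
          omega
      exact Sigma.mk.inj_iff.mpr ⟨rfl, heq_of_eq (Fin.ext hsnd)⟩
    · exfalso
      have hr := hBrange ⟨i', a'⟩ h0'
      rcases Nat.lt_or_ge a.val 2 with ha | ha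
      · rcases Nat.lt_or_ge a.val 1 with hb1 | hb1
        · have hh := hF0x ⟨i, a⟩ h0 (show (a:ℕ) = 0 by omega)
          rw [hh] at heq
          exact hr.2.2.1 (by rw [← heq])
        · have hh := hF0y ⟨i, a⟩ h0 (show (a:ℕ) = 1 by omega)
          rw [hh] at heq
          exact hr.2.2.2 (by rw [← heq])
      · have := hAk ⟨i, a⟩ h0 ha
        have := hr.1
        omega
    · exfalso
      have hr := hBrange ⟨i, a⟩ h0
      rcases Nat.lt_or_ge a'.val 2 with ha | ha
      · rcases Nat.lt_or_ge a'.val 1 with hb1 | hb1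
        · have hh := hF0x ⟨i', a'⟩ h0' (show (a':ℕ) = 0 by omega)
          rw [hh] at heq
          exact hr.2.2.1 (by rw [heq])
        · have hh := hF0y ⟨i', a'⟩ h0' (show (a':ℕ) = 1 by omega)
          rw [hh] at heq
          exact hr.2.2.2 (by rw [heq])
      · have := hAk ⟨i', a'⟩ h0' ha
        have := hr.1
        omega
    · rw [hFB ⟨i, a⟩ h0, hFB ⟨i', a'⟩ h0'] at hveq
      have hsk := (skf_strictMono x.val).injective hveq
      have hl1 := lidx_ge hm ⟨i, a⟩ h0
      have hl2 := lidx_ge hm ⟨i', a'⟩ h0'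
      rw [← hq] at hl1 hl2
      exact lidx_inj (by omega)
  refine ⟨⟨F, ?_⟩, hFinj⟩
  rintro ⟨i, a⟩ ⟨i', a'⟩ hadj
  rw [cliqueUnion_adj] at hadj
  obtain ⟨hne, hfst⟩ := hadj
  obtain rfl : i = i' := hfst
  have haa : (a : ℕ) ≠ (a' : ℕ) := by
    intro h
    exact hne (Sigma.mk.inj_iff.mpr ⟨rfl, heq_of_eq (Fin.ext h)⟩)
  by_cases h0 : (i : ℕ) = 0
  · -- block 0
    have hpq : p i = q := by rw [hq]; congr 1; exact Fin.ext h0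
    have key : ∀ c c' : Fin (p i), (c : ℕ) < (c' : ℕ) →
        (Gc n k b ⊔ SimpleGraph.fromEdgeSet {s(x, y)}).Adj (F ⟨i, c⟩) (F ⟨i, c'⟩) := by
      intro c c' hlt
      rcases Nat.lt_or_ge (c' : ℕ) 2 with hc2 | hc2
      · -- c = 0, c' = 1
        have hcv : (c : ℕ) = 0 := by omega
        have hcv' : (c' : ℕ) = 1 := by omega
        rw [hF0x ⟨i, c⟩ h0 hcv, hF0y ⟨i, c'⟩ h0 hcv']
        exact Or.inr (by rw [SimpleGraph.fromEdgeSet_adj]; exact ⟨rfl, hxy⟩)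
      · -- c' maps into A
        have e2 : (F ⟨i, c'⟩).val = (c' : ℕ) - 2 := hF0A ⟨i, c'⟩ h0 hc2
        have hk2 : (F ⟨i, c'⟩).val < k := hAk ⟨i, c'⟩ h0 hc2
        rcases Nat.lt_or_ge (c : ℕ) 2 with hcc | hcc
        · rcases Nat.lt_or_ge (c : ℕ) 1 with hc1 | hc1
          · rw [hF0x ⟨i, c⟩ h0 (show (c:ℕ) = 0 by omega)]
            refine Or.inl (Gc_adj.mpr ⟨?_, Or.inr (Or.inl hk2)⟩)
            intro h
            rw [← h] at hk2
            omega
          · rw [hF0y ⟨i, c⟩ h0 (show (c:ℕ) = 1 by omega)]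
            refine Or.inl (Gc_adj.mpr ⟨?_, Or.inr (Or.inl hk2)⟩)
            intro h
            rw [← h] at hk2
            have : k + b ≤ (y : ℕ) := hy
            omega
        · have e1 : (F ⟨i, c⟩).val = (c : ℕ) - 2 := hF0A ⟨i, c⟩ h0 hcc
          have hk1 : (F ⟨i, c⟩).val < k := hAk ⟨i, c⟩ h0 hcc
          refine Or.inl (Gc_adj.mpr ⟨?_, Or.inl hk1⟩)
          intro h
          have := congrArg Fin.val h
          omega
    rcases Nat.lt_trichotomy (a : ℕ) (a' : ℕ) with h | h | h
    · exact key a a' h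
    · exact absurd h haa
    · exact (key a' a h).symm
  · -- block ≠ 0: both in B
    have hr1 := hBrange ⟨i, a⟩ h0
    have hr2 := hBrange ⟨i, a'⟩ h0
    have hg1 : q ≤ off p i.val + (a : ℕ) := by
      have := lidx_ge hm ⟨i, a⟩ h0
      rw [← hq] at this
      exact this
    have hg2 : q ≤ off p i.val + (a' : ℕ) := by
      have := lidx_ge hm ⟨i, a'⟩ h0
      rw [← hq] at this
      exact this
    have hld : k + (off p i.val + (a : ℕ) - q) ≠ k + (off p i.val + (a' : ℕ) - q) := by
      omega
    have hvne : (F ⟨i, a⟩).val ≠ (F ⟨i, a'⟩).val := by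
      rw [hFB ⟨i, a⟩ h0, hFB ⟨i, a'⟩ h0]
      intro h
      exact hld ((skf_strictMono (x : ℕ)).injective h)
    refine Or.inl (Gc_adj.mpr ⟨fun h => hvne (congrArg Fin.val h), ?_⟩)
    exact Or.inr (Or.inr ⟨hr1.2.1, hr2.2.1⟩)


lemma Gc_isSat {m : ℕ} (hm : 0 < m) (p : Fin m → ℕ) (hp : ∀ i, 2 ≤ p i)
    (hmono : Monotone p) {n : ℕ} (hn : ∑ i, p i ≤ n) :
    isSat (cliqueUnion m p) (Gc n (p ⟨0, hm⟩ - 2) (∑ i, p i - p ⟨0, hm⟩ + 1)) := by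
  constructor
  · exact free_aux hm p hp hmono n
  · intro x y hxy hnadj
    set q := p ⟨0, hm⟩ with hq
    set s := ∑ i, p i with hs
    set k := q - 2 with hk
    set b := s - q + 1 with hb
    rw [Gc_adj] at hnadj
    push_neg at hnadj
    have hcond := hnadj hxy
    obtain ⟨h1, h2, h3⟩ := hcond
    rcases Nat.lt_or_ge y.val (k + b) with hyl | hyl
    · -- then x.val ≥ k + b ; swap roles
      have hxl : k + b ≤ x.val := by
        by_contra hc
        push_neg at hc
        have := h3 hc
        omega
      have := sat_edge hm p hp hmono hn y x hxy.symm h2 hxl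
      rw [show s(x, y) = s(y, x) from Sym2.eq_swap]
      exact this
    · exact sat_edge hm p hp hmono hn x y hxy h1 hyl

/-- For `H = K_{p_1} ∪ ... ∪ K_{p_m}` with `2 <= p_1 <= ... <= p_m`, there exist
constants `c_H, c'_H` with `(p_1 - 2) n - c'_H <= sat(H, n) <= (p_1 - 2) n + c_H`
for all `n >= p_1 + ... + p_m`. -/
theorem stmt16 (m : ℕ) (hm : 0 < m) (p : Fin m → ℕ) (hp : ∀ i, 2 ≤ p i)
    (hmono : Monotone p) :
    ∃ c c' : ℤ, ∀ n : ℕ, ∑ i, p i ≤ n →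
      ((p ⟨0, hm⟩ : ℤ) - 2) * n - c' ≤ (satNum (cliqueUnion m p) n : ℤ) ∧
        (satNum (cliqueUnion m p) n : ℤ) ≤ ((p ⟨0, hm⟩ : ℤ) - 2) * n + c := by
  classical
  set q := p ⟨0, hm⟩ with hq
  set s := ∑ i, p i with hs
  set k := q - 2 with hk
  set b := s - q + 1 with hb
  have hq2 : 2 ≤ q := hp _
  refine ⟨((b * (k + b) : ℕ) : ℤ), ((k * (2 * k + 1) : ℕ) : ℤ), ?_⟩
  intro n hn
  set S : Set ℕ := {m' | ∃ G : SimpleGraph (Fin n),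
    isSat (cliqueUnion m p) G ∧ Nat.card G.edgeSet = m'} with hS
  have hsatdef : satNum (cliqueUnion m p) n = sInf S := rfl
  have hsat := Gc_isSat hm p hp hmono (n := n) hn
  have hmemset : Nat.card (Gc n k b).edgeSet ∈ S := ⟨_, hsat, rfl⟩
  have hcount : Nat.card (Gc n k b).edgeSet ≤ k * n + b * (k + b) := by
    rw [Nat.card_eq_fintype_card, ← SimpleGraph.edgeFinset_card]
    exact Gc_card_le n k b
  have hub : satNum (cliqueUnion m p) n ≤ k * n + b * (k + b) := by
    rw [hsatdef]
    exact le_trans (Nat.sInf_le hmemset) hcount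
  obtain ⟨G, hGsat, hGcard⟩ := Nat.sInf_mem (⟨_, hmemset⟩ : S.Nonempty)
  letI : DecidableRel G.Adj := Classical.decRel _
  have hP : ∀ x y : Fin n, x ≠ y → ¬ G.Adj x y →
      k ≤ ((G.neighborFinset x) ∩ (G.neighborFinset y)).card := by
    intro x y h1 h2
    exact common_aux hm p hmono G h1 hGsat.1 (hGsat.2 x y h1 h2)
  have hlb := lower_aux G hP
  have hGedge : G.edgeFinset.card = satNum (cliqueUnion m p) n := by
    rw [SimpleGraph.edgeFinset_card, ← Nat.card_eq_fintype_card, hGcard, hsatdef]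
  rw [hGedge] at hlb
  have hkz : ((k : ℕ) : ℤ) = (q : ℤ) - 2 := by omega
  constructor
  · have h1 : ((k * n : ℕ) : ℤ) ≤ ((satNum (cliqueUnion m p) n : ℕ) : ℤ)
        + ((k * (2 * k + 1) : ℕ) : ℤ) := by exact_mod_cast hlb
    push_cast at h1 ⊢
    nlinarith [h1]
  · have h1 : ((satNum (cliqueUnion m p) n : ℕ) : ℤ) ≤ ((k * n + b * (k + b) : ℕ) : ℤ) := by
      exact_mod_cast hub
    push_cast at h1 ⊢
    nlinarith [h1]
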